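/- Let Q = ⟨X,A,S,τ⟩ ⊑ Q' = ⟨X',A',S',τ'⟩ be QBAFs for an explanandum e with X' = X ∪ {b} for some b ∉ X, such that every base score of Q' lies in the open interval (0,1) and every edge in (A'∪S')∖(A∪S) has b as an endpoint. Then under the DF-QuAD evaluation, for every c ∈ X such that there is exactly one path from b to c in Q', σ(Q',c) ≠ σ(Q,c). -/
import Mathlib


universe u v

variable {U : Type u} {Ag : Type v}

/-- A bipolar argumentation framework (BAF): arguments `X`, attacks `Att`, supports `Supp`. -/
structure BAF (U : Type u) where
  X : Finset U
  Att : Finset (U × U)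
  Supp : Finset (U × U)

namespace BAF

variable [DecidableEq U]

/-- The edges of a BAF: attacks together with supports. -/
def edges (B : BAF U) : Finset (U × U) := B.Att ∪ B.Supp

/-- A path from `a` to `b`: a nonempty list of consecutive edges `(c₀,c₁),…,(c_{n−1},cₙ)`
with `c₀ = a` and `cₙ = b`. -/
inductive IsPath (B : BAF U) : U → U → List (U × U) → Prop
  | single {a b : U} (h : (a, b) ∈ B.edges) : IsPath B a b [(a, b)]
  | cons {a c b : U} {p : List (U × U)} (h : (a, c) ∈ B.edges)
      (hp : IsPath B c b p) : IsPath B a b ((a, c) :: p)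

/-- `B ⊑ B'` for BAFs (componentwise inclusion). -/
def Sub (B B' : BAF U) : Prop := B.X ⊆ B'.X ∧ B.Att ⊆ B'.Att ∧ B.Supp ⊆ B'.Supp

/-- `B` is a BAF for the explanandum `e`. -/
structure IsFor (B : BAF U) (e : U) : Prop where
  e_mem : e ∈ B.X
  att_mem : ∀ p ∈ B.Att, p.1 ∈ B.X ∧ p.2 ∈ B.X
  supp_mem : ∀ p ∈ B.Supp, p.1 ∈ B.X ∧ p.2 ∈ B.X
  disj : ∀ p : U × U, ¬(p ∈ B.Att ∧ p ∈ B.Supp)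
  no_out : ∀ a : U, (e, a) ∉ B.edges
  reach : ∀ a ∈ B.X, a ≠ e → ∃ p, B.IsPath a e p
  acyclic : ∀ (a : U) (p : List (U × U)), ¬ B.IsPath a a p

/-- The number of attack edges occurring in a path. -/
def attCount (B : BAF U) (p : List (U × U)) : ℕ :=
  (p.filter (fun q => q ∈ B.Att)).length

/-- Pro arguments: arguments with a path to `e` containing an even number of attacks. -/
def pro (B : BAF U) (e : U) : Set U :=
  {a | a ∈ B.X ∧ ∃ p, B.IsPath a e p ∧ Even (B.attCount p)}

/-- Con arguments: arguments with a path to `e` containing an odd number of attacks. -/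
def con (B : BAF U) (e : U) : Set U :=
  {a | a ∈ B.X ∧ ∃ p, B.IsPath a e p ∧ Odd (B.attCount p)}

/-- The shortest path from `x` to `e` is strictly shorter than every path from `y` to `e`. -/
def SPlt (B : BAF U) (e x y : U) : Prop :=
  ∃ p, B.IsPath x e p ∧ ∀ q, B.IsPath y e q → p.length < q.length

end BAF

/-- A quantitative bipolar argumentation framework (QBAF), with base scores `bs`. -/
structure QBAF (U : Type u) where
  X : Finset U
  Att : Finset (U × U)
  Supp : Finset (U × U)
  bs : U → ℝ

namespace QBAF

variable [DecidableEq U]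

def toBAF (Q : QBAF U) : BAF U := ⟨Q.X, Q.Att, Q.Supp⟩

def edges (Q : QBAF U) : Finset (U × U) := Q.Att ∪ Q.Supp

/-- `Q` is a QBAF for `e`: its underlying BAF is for `e` and base scores lie in `[0,1]`. -/
def IsFor (Q : QBAF U) (e : U) : Prop :=
  Q.toBAF.IsFor e ∧ ∀ a ∈ Q.X, Q.bs a ∈ Set.Icc (0 : ℝ) 1

/-- `Q ⊑ Q'` for QBAFs. -/
def Sub (Q Q' : QBAF U) : Prop :=
  Q.X ⊆ Q'.X ∧ Q.Att ⊆ Q'.Att ∧ Q.Supp ⊆ Q'.Supp ∧ ∀ a ∈ Q.X, Q'.bs a = Q.bs a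

def attackers (Q : QBAF U) (a : U) : Finset U :=
  (Q.Att.filter (fun p => p.2 = a)).image Prod.fst

def supporters (Q : QBAF U) (a : U) : Finset U :=
  (Q.Supp.filter (fun p => p.2 = a)).image Prod.fst

end QBAF

/-- The DF-QuAD aggregation function on finite lists of values. -/
noncomputable def dfAgg : List ℝ → ℝ
  | [] => 0
  | v :: vs => v + dfAgg vs - v * dfAgg vs

/-- The DF-QuAD combination function. -/
noncomputable def dfComb (v0 vm vp : ℝ) : ℝ :=
  if vp ≤ vm then v0 - v0 * |vp - vm| else v0 + (1 - v0) * |vp - vm|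

/-- `f` is the DF-QuAD evaluation of the QBAF `Q`. -/
def IsDFQuADEval [DecidableEq U] (Q : QBAF U) (f : U → ℝ) : Prop :=
  ∀ a ∈ Q.X,
    f a = dfComb (Q.bs a) (dfAgg ((Q.attackers a).toList.map f))
        (dfAgg ((Q.supporters a).toList.map f))

/-- The stance determined by an evaluation value in `[0,1]`:
`−` (coded `-1`) on `[0,0.5)`, `0` on `{0.5}`, `+` (coded `1`) on `(0.5,1]`. -/
noncomputable def stanceVal (v : ℝ) : ℤ :=
  if v < 1 / 2 then -1 else if v = 1 / 2 then 0 else 1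

/-- An argumentative exchange (AX): exchange BAFs `B`, private QBAFs `Q`,
and a contributor mapping `contrib`. -/
structure AX (U : Type u) (Ag : Type v) where
  n : ℕ
  B : ℕ → BAF U
  Q : Ag → ℕ → QBAF U
  contrib : U × U → Ag × ℕ

namespace AX

variable [DecidableEq U]

/-- `E` is an AX for the explanandum `e` amongst the agents `Ag`. -/
structure IsAX (E : AX U Ag) (e : U) : Prop where
  n_pos : 0 < E.n
  agents : ∃ α β : Ag, α ≠ β
  B_for : ∀ t ≤ E.n, (E.B t).IsFor e
  B0_X : (E.B 0).X = {e}
  B0_Att : (E.B 0).Att = ∅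
  B0_Supp : (E.B 0).Supp = ∅
  B_mono : ∀ t < E.n, (E.B t).Sub (E.B (t + 1))
  Q_for : ∀ (α : Ag), ∀ t ≤ E.n, (E.Q α t).IsFor e
  Q_mono : ∀ (α : Ag), ∀ t < E.n, (E.Q α t).Sub (E.Q α (t + 1))
  Q_diff_X : ∀ (α : Ag), ∀ t < E.n,
    (E.Q α (t + 1)).X \ (E.Q α t).X ⊆ (E.B (t + 1)).X \ (E.B t).X
  Q_diff_Att : ∀ (α : Ag), ∀ t < E.n,
    (E.Q α (t + 1)).Att \ (E.Q α t).Att ⊆ (E.B (t + 1)).Att \ (E.B t).Att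
  Q_diff_Supp : ∀ (α : Ag), ∀ t < E.n,
    (E.Q α (t + 1)).Supp \ (E.Q α t).Supp ⊆ (E.B (t + 1)).Supp \ (E.B t).Supp
  learn_X : ∀ (α : Ag), ∀ t < E.n,
    (E.B (t + 1)).X \ (E.B t).X ⊆ (E.Q α (t + 1)).X
  learn_Att : ∀ (α : Ag), ∀ t < E.n,
    (E.B (t + 1)).Att \ (E.B t).Att ⊆ (E.Q α (t + 1)).Att
  learn_Supp : ∀ (α : Ag), ∀ t < E.n,
    (E.B (t + 1)).Supp \ (E.B t).Supp ⊆ (E.Q α (t + 1)).Supp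
  contrib_pos : ∀ p ∈ (E.B E.n).edges, 0 < (E.contrib p).2
  contrib_le : ∀ p ∈ (E.B E.n).edges, (E.contrib p).2 ≤ E.n
  contrib_mem : ∀ p ∈ (E.B E.n).edges, p ∈ (E.B (E.contrib p).2).edges
  contrib_new : ∀ p ∈ (E.B E.n).edges, p ∉ (E.B ((E.contrib p).2 - 1)).edges

/-- The set of edges contributed by agent `α` at timestep `t`. -/
def Cset [DecidableEq Ag] (E : AX U Ag) (α : Ag) (t : ℕ) : Finset (U × U) :=
  (E.B E.n).edges.filter (fun p => E.contrib p = (α, t))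

end AX

/-- All agents hold the same stance at timestep `t`. -/
def ResolvedAt (st : Ag → ℕ → ℤ) (t : ℕ) : Prop := ∀ α β : Ag, st α t = st β t

/-- The AX (with an initial conflict) is resolved. -/
def Resolved (E : AX U Ag) (st : Ag → ℕ → ℤ) : Prop :=
  ¬ ResolvedAt st 0 ∧ ResolvedAt st E.n ∧ ∀ t, 0 < t → t < E.n → ¬ ResolvedAt st t

/-- The AX (with an initial conflict) is unresolved. -/
def Unresolved (E : AX U Ag) (st : Ag → ℕ → ℤ) : Prop :=
  ¬ ResolvedAt st 0 ∧ ∀ t, 0 < t → t ≤ E.n → ¬ ResolvedAt st t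

/-- Agent `α` is arguing for `e` at `t`: some agent has a strictly smaller stance. -/
def ArguingFor (st : Ag → ℕ → ℤ) (α : Ag) (t : ℕ) : Prop := ∃ β, st β t < st α t

/-- Agent `α` is arguing against `e` at `t`: some agent has a strictly greater stance. -/
def ArguingAgainst (st : Ag → ℕ → ℤ) (α : Ag) (t : ℕ) : Prop := ∃ β, st α t < st β t

section Behaviours

variable [DecidableEq U]

/-- Condition (1) of the greedy behaviour: `(a,b)` is a pair of the private QBAF `Qp`
not yet in the exchange BAF `Bp`, in line with the agent's state (`forE`). -/
def GreedyEligible (Qp : QBAF U) (Bp : BAF U) (e : U) (forE : Bool) (a b : U) : Prop :=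
  (a, b) ∈ Qp.edges ∧ (a, b) ∉ Bp.edges ∧
    (if forE then
        ((a, b) ∈ Qp.Supp ∧ (b ∈ Bp.pro e ∨ b = e)) ∨ ((a, b) ∈ Qp.Att ∧ b ∈ Bp.con e)
      else
        ((a, b) ∈ Qp.Supp ∧ b ∈ Bp.con e) ∨ ((a, b) ∈ Qp.Att ∧ (b ∈ Bp.pro e ∨ b = e)))

/-- A greedy choice: eligible, of maximal strength (2), and closest to `e` among
equally strong eligible pairs (3). -/
def GreedyChoice (Qp : QBAF U) (Bp : BAF U) (σα : U → ℝ) (e : U) (forE : Bool)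
    (a b : U) : Prop :=
  GreedyEligible Qp Bp e forE a b ∧
    (∀ a' b' : U, GreedyEligible Qp Bp e forE a' b' → σα a' ≤ σα a) ∧
    (∀ a'' b'' : U, GreedyEligible Qp Bp e forE a'' b'' → σα a'' = σα a →
      ¬ BAF.SPlt Qp.toBAF e a'' a)

/-- A contribution set is a correct greedy contribution: empty or a single greedy choice. -/
def GreedyOK (Qp : QBAF U) (Bp : BAF U) (σα : U → ℝ) (e : U) (forE : Bool)
    (C : Finset (U × U)) : Prop :=
  C = ∅ ∨ ∃ a b : U, C = {(a, b)} ∧ GreedyChoice Qp Bp σα e forE a b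

/-- Agent `α` exhibits greedy behaviour throughout the AX `E`. -/
def GreedyBehaviour [DecidableEq Ag] (E : AX U Ag) (e : U)
    (ev : Ag → QBAF U → U → ℝ) (st : Ag → ℕ → ℤ) (α : Ag) : Prop :=
  ∀ t, 0 < t → t ≤ E.n →
    E.Cset α t = ∅ ∨
      ∃ a b : U, E.Cset α t = {(a, b)} ∧
        (ArguingFor st α (t - 1) →
          GreedyChoice (E.Q α (t - 1)) (E.B (t - 1)) (ev α (E.Q α (t - 1))) e true a b) ∧
        (ArguingAgainst st α (t - 1) →
          GreedyChoice (E.Q α (t - 1)) (E.B (t - 1)) (ev α (E.Q α (t - 1))) e false a b)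

/-- The inner condition of the shallow behaviour for a contribution set `C`. -/
def ShallowInner (Qp : QBAF U) (Bp : BAF U) (σα : U → ℝ) (e : U) (forE : Bool)
    (C : Finset (U × U)) (max : ℕ) : Prop :=
  C.card ≤ max ∧ (∀ p ∈ C, p.2 = e) ∧
    (if forE then
        C ⊆ Qp.Supp \ Bp.Supp ∧
          ∀ p ∈ C, ∀ b : U, (b, e) ∈ Qp.Supp → (b, e) ∉ Bp.Supp ∪ C → σα b ≤ σα p.1
      else
        C ⊆ Qp.Att \ Bp.Att ∧
          ∀ p ∈ C, ∀ b : U, (b, e) ∈ Qp.Att → (b, e) ∉ Bp.Att ∪ C → σα b ≤ σα p.1)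

/-- A contribution set is a correct shallow contribution: it satisfies the inner condition
and is of maximal cardinality doing so. -/
def ShallowOK (Qp : QBAF U) (Bp : BAF U) (σα : U → ℝ) (e : U) (forE : Bool)
    (C : Finset (U × U)) (max : ℕ) : Prop :=
  ShallowInner Qp Bp σα e forE C max ∧
    ∀ C' : Finset (U × U), ShallowInner Qp Bp σα e forE C' max → C'.card ≤ C.card

/-- A private view of the exchange BAF `Bp` by an agent with private QBAF `Qα`. -/
def PrivateView (Bp : BAF U) (Qα : QBAF U) (V : QBAF U) : Prop :=
  Bp.Sub V.toBAF ∧ V.Sub Qα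

/-- `ε` is the perceived effect on `e` of the pair `(a,b)` for an agent with private QBAF
`Qp` given the exchange BAF `Bp` (under the DF-QuAD evaluation). -/
def PerceivedEffect (Qp : QBAF U) (Bp : BAF U) (e a b : U) (ε : ℝ) : Prop :=
  ∃ (V V' : QBAF U) (f f' : U → ℝ),
    PrivateView Bp Qp V ∧
    V'.X = insert a V.X ∧
    V'.Att = (V'.X ×ˢ V'.X) ∩ Qp.Att ∧
    V'.Supp = (V'.X ×ˢ V'.X) ∩ Qp.Supp ∧
    (∀ x ∈ V'.X, V'.bs x = Qp.bs x) ∧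
    IsDFQuADEval V f ∧ IsDFQuADEval V' f' ∧
    ε = f' e - f e

/-- A pair eligible for the counterfactual behaviour. -/
def CFEligible (Qp : QBAF U) (Bp : BAF U) (a b : U) : Prop :=
  (a, b) ∈ Qp.edges ∧ (a, b) ∉ Bp.edges ∧ a ∈ Qp.X ∧ a ∉ Bp.X ∧ b ∈ Bp.X

/-- Agent `α` exhibits counterfactual behaviour throughout the AX `E`,
where `εf α t a b` is the perceived effect of `(a,b)` at timestep `t`. -/
def CFBehaviour [DecidableEq Ag] (E : AX U Ag) (st : Ag → ℕ → ℤ)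
    (εf : Ag → ℕ → U → U → ℝ) (α : Ag) : Prop :=
  ∀ t, 0 < t → t ≤ E.n →
    E.Cset α t = ∅ ∨
      ∃ a b : U, E.Cset α t = {(a, b)} ∧
        CFEligible (E.Q α (t - 1)) (E.B (t - 1)) a b ∧
        (ArguingFor st α (t - 1) →
          0 < εf α t a b ∧
            ∀ a' b' : U, CFEligible (E.Q α (t - 1)) (E.B (t - 1)) a' b' →
              εf α t a' b' ≤ εf α t a b) ∧
        (ArguingAgainst st α (t - 1) →
          εf α t a b < 0 ∧
            ∀ a' b' : U, CFEligible (E.Q α (t - 1)) (E.B (t - 1)) a' b' →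
              εf α t a b ≤ εf α t a' b')

end Behaviours
section MyAux

lemma dfAgg_eq (l : List ℝ) : dfAgg l = 1 - (l.map (fun v => 1 - v)).prod := by
  induction l with
  | nil => simp [dfAgg]
  | cons v vs ih => simp [dfAgg, ih]; ring

lemma dfAgg_toList {U : Type u} [DecidableEq U] (s : Finset U) (g : U → ℝ) :
    dfAgg (s.toList.map g) = 1 - ∏ a ∈ s, (1 - g a) := by
  rw [dfAgg_eq, List.map_map]
  congr 1
  rw [← Finset.prod_map_toList]
  rfl

lemma dfComb_bounds {v0 vm vp : ℝ} (h0 : 0 < v0) (h1 : v0 < 1) (hm : 0 ≤ vm)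
    (hm1 : vm < 1) (hp : 0 ≤ vp) (hp1 : vp < 1) :
    0 < dfComb v0 vm vp ∧ dfComb v0 vm vp < 1 := by
  unfold dfComb
  split
  · rename_i h
    rw [abs_of_nonpos (by linarith)]
    constructor <;> nlinarith
  · rename_i h
    rw [abs_of_pos (by linarith)]
    constructor <;> nlinarith

lemma dfComb_anti {v0 vm wm vp : ℝ} (h0 : 0 < v0) (h1 : v0 < 1) (h : vm < wm) :
    dfComb v0 wm vp < dfComb v0 vm vp := by
  unfold dfComb
  rcases le_or_gt vp vm with h2 | h2 <;> rcases le_or_gt vp wm with h3 | h3 <;>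
    simp only [if_pos, if_neg, h2, h3, not_le] <;> first
    | (rw [abs_of_nonpos (by linarith), abs_of_nonpos (by linarith)]; nlinarith)
    | (rw [abs_of_nonpos (by linarith), abs_of_pos (by linarith)]; nlinarith)
    | (rw [abs_of_pos (by linarith), abs_of_pos (by linarith)]; nlinarith)
    | linarith

lemma dfComb_ne_left {v0 vm wm vp : ℝ} (h0 : 0 < v0) (h1 : v0 < 1) (h : vm ≠ wm) :
    dfComb v0 vm vp ≠ dfComb v0 wm vp := by
  rcases h.lt_or_gt with h | h
  · exact (dfComb_anti h0 h1 h).ne'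
  · exact (dfComb_anti h0 h1 h).ne

lemma dfComb_mono {v0 vm vp wp : ℝ} (h0 : 0 < v0) (h1 : v0 < 1) (h : vp < wp) :
    dfComb v0 vm vp < dfComb v0 vm wp := by
  unfold dfComb
  rcases le_or_gt vp vm with h2 | h2 <;> rcases le_or_gt wp vm with h3 | h3 <;>
    simp only [if_pos, if_neg, h2, h3, not_le] <;> first
    | (rw [abs_of_nonpos (by linarith), abs_of_nonpos (by linarith)]; nlinarith)
    | (rw [abs_of_nonpos (by linarith), abs_of_pos (by linarith)]; nlinarith)
    | (rw [abs_of_pos (by linarith), abs_of_pos (by linarith)]; nlinarith)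
    | linarith

lemma dfComb_ne_right {v0 vm vp wp : ℝ} (h0 : 0 < v0) (h1 : v0 < 1) (h : vp ≠ wp) :
    dfComb v0 vm vp ≠ dfComb v0 vm wp := by
  rcases h.lt_or_gt with h | h
  · exact (dfComb_mono h0 h1 h).ne
  · exact (dfComb_mono h0 h1 h).ne'

end MyAux
section MyAux2

variable {U : Type u} [DecidableEq U]

lemma BAF.IsPath.ne_nil {B : BAF U} {a c : U} {p : List (U × U)}
    (h : B.IsPath a c p) : p ≠ [] := by cases h <;> simp

lemma BAF.IsPath.append_edge {B : BAF U} {a c d : U} {p : List (U × U)}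
    (h : B.IsPath a c p) (hd : (c, d) ∈ B.edges) :
    B.IsPath a d (p ++ [(c, d)]) := by
  induction h with
  | single h => exact .cons h (.single hd)
  | cons h _ ih => exact .cons h (ih hd)

lemma BAF.IsPath.lastDecomp {B : BAF U} {a c : U} {p : List (U × U)}
    (h : B.IsPath a c p) :
    ∃ q x, p = q ++ [(x, c)] ∧ (x, c) ∈ B.edges ∧
      ((q = [] ∧ x = a) ∨ B.IsPath a x q) := by
  induction h with
  | single h => exact ⟨[], _, rfl, h, Or.inl ⟨rfl, rfl⟩⟩
  | @cons a m _ _ h hp ih =>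
    obtain ⟨q, x, rfl, hx, hq⟩ := ih
    rcases hq with ⟨rfl, rfl⟩ | hq
    · exact ⟨[(a, x)], x, rfl, hx, Or.inr (.single h)⟩
    · exact ⟨(a, m) :: q, x, rfl, hx, Or.inr (.cons h hq)⟩

open Classical in
noncomputable def anc (B : BAF U) (x : U) : Finset U :=
  B.X.filter (fun y => ∃ p, B.IsPath y x p)

lemma anc_card_lt {B : BAF U} (hend : ∀ p ∈ B.edges, p.1 ∈ B.X ∧ p.2 ∈ B.X)
    (hacy : ∀ (a : U) (p : List (U × U)), ¬ B.IsPath a a p)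
    {a x : U} (h : (a, x) ∈ B.edges) : (anc B a).card < (anc B x).card := by
  classical
  apply Finset.card_lt_card
  constructor
  · intro y hy
    simp only [anc, Finset.mem_filter] at hy ⊢
    obtain ⟨hy1, p, hp⟩ := hy
    exact ⟨hy1, _, hp.append_edge h⟩
  · intro hsub
    have ha : a ∈ anc B x := by
      simp only [anc, Finset.mem_filter]
      exact ⟨(hend _ h).1, _, .single h⟩
    have := hsub ha
    simp only [anc, Finset.mem_filter] at this
    exact hacy a _ this.2.choose_spec

lemma QBAF.mem_attackers {Q : QBAF U} {a c : U} :
    a ∈ Q.attackers c ↔ (a, c) ∈ Q.Att := by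
  simp only [QBAF.attackers, Finset.mem_image, Finset.mem_filter]
  constructor
  · rintro ⟨⟨x, y⟩, ⟨h1, rfl⟩, rfl⟩; exact h1
  · intro h; exact ⟨(a, c), ⟨h, rfl⟩, rfl⟩

lemma QBAF.mem_supporters {Q : QBAF U} {a c : U} :
    a ∈ Q.supporters c ↔ (a, c) ∈ Q.Supp := by
  simp only [QBAF.supporters, Finset.mem_image, Finset.mem_filter]
  constructor
  · rintro ⟨⟨x, y⟩, ⟨h1, rfl⟩, rfl⟩; exact h1
  · intro h; exact ⟨(a, c), ⟨h, rfl⟩, rfl⟩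

end MyAux2
section MyAux3

variable {U : Type u} [DecidableEq U]

lemma agg_bounds (s : Finset U) (g : U → ℝ) (h : ∀ a ∈ s, 0 < g a ∧ g a < 1) :
    0 ≤ dfAgg (s.toList.map g) ∧ dfAgg (s.toList.map g) < 1 := by
  rw [dfAgg_toList]
  have hpos : 0 < ∏ a ∈ s, (1 - g a) :=
    Finset.prod_pos (fun a ha => by linarith [(h a ha).2])
  have hle : ∏ a ∈ s, (1 - g a) ≤ 1 :=
    Finset.prod_le_one (fun a ha => by linarith [(h a ha).2])
      (fun a ha => by linarith [(h a ha).1])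
  constructor <;> linarith

lemma QBAF.edge_mem {Q : QBAF U} {e : U} (hQ : Q.toBAF.IsFor e) {p : U × U}
    (hp : p ∈ Q.edges) : p.1 ∈ Q.X ∧ p.2 ∈ Q.X := by
  rcases Finset.mem_union.mp hp with h | h
  · exact hQ.att_mem p h
  · exact hQ.supp_mem p h

lemma toBAF_edges (Q : QBAF U) : Q.toBAF.edges = Q.edges := rfl

lemma eval_bounds (Q : QBAF U) (e : U) (hQ : Q.toBAF.IsFor e)
    (hbs : ∀ x ∈ Q.X, 0 < Q.bs x ∧ Q.bs x < 1) (f : U → ℝ)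
    (hf : IsDFQuADEval Q f) : ∀ x ∈ Q.X, 0 < f x ∧ f x < 1 := by
  have key : ∀ n : ℕ, ∀ x ∈ Q.X, (anc Q.toBAF x).card ≤ n → 0 < f x ∧ f x < 1 := by
    intro n
    induction n with
    | zero =>
      intro x hx _
      rw [hf x hx]
      have hatt : Q.attackers x = ∅ := by
        by_contra h
        obtain ⟨a, ha⟩ := Finset.nonempty_of_ne_empty h
        have : (a, x) ∈ Q.toBAF.edges :=
          Finset.mem_union_left _ (QBAF.mem_attackers.mp ha)
        have := anc_card_lt (fun p hp => QBAF.edge_mem hQ hp) hQ.acyclic this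
        omega
      have hsupp : Q.supporters x = ∅ := by
        by_contra h
        obtain ⟨a, ha⟩ := Finset.nonempty_of_ne_empty h
        have : (a, x) ∈ Q.toBAF.edges :=
          Finset.mem_union_right _ (QBAF.mem_supporters.mp ha)
        have := anc_card_lt (fun p hp => QBAF.edge_mem hQ hp) hQ.acyclic this
        omega
      rw [hatt, hsupp]
      simp only [Finset.toList_empty, List.map_nil]
      exact dfComb_bounds (hbs x hx).1 (hbs x hx).2 le_rfl one_pos le_rfl one_pos
    | succ n ih =>
      intro x hx hcard
      rw [hf x hx]
      have hattb : ∀ a ∈ Q.attackers x, 0 < f a ∧ f a < 1 := by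
        intro a ha
        have he : (a, x) ∈ Q.toBAF.edges :=
          Finset.mem_union_left _ (QBAF.mem_attackers.mp ha)
        have := anc_card_lt (fun p hp => QBAF.edge_mem hQ hp) hQ.acyclic he
        exact ih a (QBAF.edge_mem hQ he).1 (by omega)
      have hsuppb : ∀ a ∈ Q.supporters x, 0 < f a ∧ f a < 1 := by
        intro a ha
        have he : (a, x) ∈ Q.toBAF.edges :=
          Finset.mem_union_right _ (QBAF.mem_supporters.mp ha)
        have := anc_card_lt (fun p hp => QBAF.edge_mem hQ hp) hQ.acyclic he
        exact ih a (QBAF.edge_mem hQ he).1 (by omega)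
      obtain ⟨h1, h2⟩ := agg_bounds (Q.attackers x) f hattb
      obtain ⟨h3, h4⟩ := agg_bounds (Q.supporters x) f hsuppb
      exact dfComb_bounds (hbs x hx).1 (hbs x hx).2 h1 h2 h3 h4
  intro x hx
  exact key _ x hx le_rfl

end MyAux3
section MyAux4

variable {U : Type u} [DecidableEq U]

lemma agg_congr (s : Finset U) (f f' : U → ℝ) (hcong : ∀ a ∈ s, f' a = f a) :
    dfAgg (s.toList.map f') = dfAgg (s.toList.map f) := by
  rw [dfAgg_toList, dfAgg_toList]
  congr 1
  exact Finset.prod_congr rfl (fun a ha => by rw [hcong a ha])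

lemma agg_ne (s : Finset U) (x : U) (hx : x ∈ s) (f f' : U → ℝ)
    (hcong : ∀ a ∈ s, a ≠ x → f' a = f a) (hne : f' x ≠ f x)
    (h1 : ∀ a ∈ s, f a < 1) :
    dfAgg (s.toList.map f') ≠ dfAgg (s.toList.map f) := by
  rw [dfAgg_toList, dfAgg_toList]
  intro h
  have hprod : ∏ a ∈ s, (1 - f' a) = ∏ a ∈ s, (1 - f a) := by linarith
  rw [← Finset.mul_prod_erase s _ hx, ← Finset.mul_prod_erase s (fun a => 1 - f a) hx] at hprod
  have herase : ∏ a ∈ s.erase x, (1 - f' a) = ∏ a ∈ s.erase x, (1 - f a) :=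
    Finset.prod_congr rfl (fun a ha => by
      rw [hcong a (Finset.mem_of_mem_erase ha) (Finset.ne_of_mem_erase ha)])
  rw [herase] at hprod
  have hP : ∏ a ∈ s.erase x, (1 - f a) ≠ 0 := by
    apply ne_of_gt
    exact Finset.prod_pos (fun a ha => by
      linarith [h1 a (Finset.mem_of_mem_erase ha)])
  have := mul_right_cancel₀ hP hprod
  apply hne
  linarith

lemma agg_insert_ne (s : Finset U) (bb : U) (hbb : bb ∉ s) (f f' : U → ℝ)
    (hcong : ∀ a ∈ s, f' a = f a) (hb0 : 0 < f' bb) (h1 : ∀ a ∈ s, f a < 1) :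
    dfAgg ((insert bb s).toList.map f') ≠ dfAgg (s.toList.map f) := by
  rw [dfAgg_toList, dfAgg_toList, Finset.prod_insert hbb]
  have hP : 0 < ∏ a ∈ s, (1 - f' a) := by
    apply Finset.prod_pos
    intro a ha
    rw [hcong a ha]
    linarith [h1 a ha]
  have hEq : ∏ a ∈ s, (1 - f' a) = ∏ a ∈ s, (1 - f a) :=
    Finset.prod_congr rfl (fun a ha => by rw [hcong a ha])
  intro h
  have : (1 - f' bb) * ∏ a ∈ s, (1 - f' a) = ∏ a ∈ s, (1 - f' a) := by
    rw [hEq] at *; linarith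
  nlinarith

end MyAux4
/-- an added argument with all base scores in (0,1) changes the DF-QuAD
evaluation of every argument reachable from it by exactly one path. -/
theorem statement14 {U : Type u} [DecidableEq U] (e : U) (Q Q' : QBAF U)
    (hQ : Q.IsFor e) (hQ' : Q'.IsFor e) (hsub : Q.Sub Q')
    (b : U) (hb : b ∉ Q.X) (hX : Q'.X = insert b Q.X)
    (hbs : ∀ x ∈ Q'.X, 0 < Q'.bs x ∧ Q'.bs x < 1)
    (hedge : ∀ p ∈ Q'.edges, p ∉ Q.edges → p.1 = b ∨ p.2 = b)
    (f f' : U → ℝ) (hf : IsDFQuADEval Q f) (hf' : IsDFQuADEval Q' f') :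
    ∀ c ∈ Q.X, (∃! p, Q'.toBAF.IsPath b c p) → f' c ≠ f c := by
  have hQB : Q.toBAF.IsFor e := hQ.1
  have hQB' : Q'.toBAF.IsFor e := hQ'.1
  have hXsub : Q.X ⊆ Q'.X := hsub.1
  have hbsQ : ∀ x ∈ Q.X, 0 < Q.bs x ∧ Q.bs x < 1 := by
    intro x hx
    have := hbs x (hXsub hx)
    rwa [hsub.2.2.2 x hx] at this
  have hbQ'X : b ∈ Q'.X := by rw [hX]; exact Finset.mem_insert_self _ _
  have hfb : ∀ x ∈ Q.X, 0 < f x ∧ f x < 1 := eval_bounds Q e hQB hbsQ f hf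
  have hfb' : ∀ x ∈ Q'.X, 0 < f' x ∧ f' x < 1 := eval_bounds Q' e hQB' hbs f' hf'
  have hesub : Q.edges ⊆ Q'.edges :=
    Finset.union_subset_union hsub.2.1 hsub.2.2.1
  have hend' : ∀ p ∈ Q'.toBAF.edges, p.1 ∈ Q'.X ∧ p.2 ∈ Q'.X :=
    fun p hp => QBAF.edge_mem hQB' hp
  -- b has no incoming Q-edges relative to the attacker/supporter sets of Q:
  have hbnA : ∀ x, b ∉ Q.attackers x := by
    intro x h
    exact hb (QBAF.edge_mem hQB (Finset.mem_union_left _ (QBAF.mem_attackers.mp h))).1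
  have hbnS : ∀ x, b ∉ Q.supporters x := by
    intro x h
    exact hb (QBAF.edge_mem hQB (Finset.mem_union_right _ (QBAF.mem_supporters.mp h))).1
  -- attacker/supporter sets in Q' vs Q
  have hattEq : ∀ x ∈ Q.X, (b, x) ∉ Q'.Att → Q'.attackers x = Q.attackers x := by
    intro x hx hbx
    ext a
    rw [QBAF.mem_attackers, QBAF.mem_attackers]
    constructor
    · intro h
      by_contra hno
      by_cases hq : (a, x) ∈ Q.edges
      · rcases Finset.mem_union.mp hq with h1 | h1
        · exact hno h1
        · exact hQB'.disj (a, x) ⟨h, hsub.2.2.1 h1⟩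
      · rcases hedge _ (Finset.mem_union_left _ h) hq with h1 | h1
        · exact hbx (by rwa [← h1])
        · exact hb (by rw [← h1]; exact hx)
    · exact fun h => hsub.2.1 h
  have hsuppEq : ∀ x ∈ Q.X, (b, x) ∉ Q'.Supp → Q'.supporters x = Q.supporters x := by
    intro x hx hbx
    ext a
    rw [QBAF.mem_supporters, QBAF.mem_supporters]
    constructor
    · intro h
      by_contra hno
      by_cases hq : (a, x) ∈ Q.edges
      · rcases Finset.mem_union.mp hq with h1 | h1
        · exact hQB'.disj (a, x) ⟨hsub.2.1 h1, h⟩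
        · exact hno h1
      · rcases hedge _ (Finset.mem_union_right _ h) hq with h1 | h1
        · exact hbx (by rwa [← h1])
        · exact hb (by rw [← h1]; exact hx)
    · exact fun h => hsub.2.2.1 h
  have hattIns : ∀ x ∈ Q.X, (b, x) ∈ Q'.Att →
      Q'.attackers x = insert b (Q.attackers x) := by
    intro x hx hbx
    ext a
    rw [QBAF.mem_attackers, Finset.mem_insert, QBAF.mem_attackers]
    constructor
    · intro h
      by_cases hab : a = b
      · exact Or.inl hab
      right
      by_cases hq : (a, x) ∈ Q.edges
      · rcases Finset.mem_union.mp hq with h1 | h1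
        · exact h1
        · exact absurd ⟨h, hsub.2.2.1 h1⟩ (hQB'.disj (a, x))
      · rcases hedge _ (Finset.mem_union_left _ h) hq with h1 | h1
        · exact absurd h1 hab
        · exact absurd (by rw [← h1]; exact hx : b ∈ Q.X) hb
    · rintro (rfl | h)
      · exact hbx
      · exact hsub.2.1 h
  have hsuppIns : ∀ x ∈ Q.X, (b, x) ∈ Q'.Supp →
      Q'.supporters x = insert b (Q.supporters x) := by
    intro x hx hbx
    ext a
    rw [QBAF.mem_supporters, Finset.mem_insert, QBAF.mem_supporters]
    constructor
    · intro h
      by_cases hab : a = b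
      · exact Or.inl hab
      right
      by_cases hq : (a, x) ∈ Q.edges
      · rcases Finset.mem_union.mp hq with h1 | h1
        · exact absurd ⟨hsub.2.1 h1, h⟩ (hQB'.disj (a, x))
        · exact h1
      · rcases hedge _ (Finset.mem_union_right _ h) hq with h1 | h1
        · exact absurd h1 hab
        · exact absurd (by rw [← h1]; exact hx : b ∈ Q.X) hb
    · rintro (rfl | h)
      · exact hbx
      · exact hsub.2.2.1 h
  -- arguments not reachable from b keep their evaluation
  have hunch : ∀ x ∈ Q.X, (∀ p, ¬ Q'.toBAF.IsPath b x p) → f' x = f x := by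
    have key : ∀ n : ℕ, ∀ x ∈ Q.X, (anc Q'.toBAF x).card ≤ n →
        (∀ p, ¬ Q'.toBAF.IsPath b x p) → f' x = f x := by
      intro n
      induction n using Nat.strong_induction_on with
      | _ n ih =>
        intro x hx hcard hnp
        have hbxA : (b, x) ∉ Q'.Att := fun h =>
          hnp _ (.single (Finset.mem_union_left _ h))
        have hbxS : (b, x) ∉ Q'.Supp := fun h =>
          hnp _ (.single (Finset.mem_union_right _ h))
        rw [hf' x (hXsub hx), hf x hx, hattEq x hx hbxA, hsuppEq x hx hbxS,
          hsub.2.2.2 x hx]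
        have hnb : ∀ a, (a, x) ∈ Q'.toBAF.edges → a ∈ Q.X → f' a = f a := by
          intro a hax haX
          have hnpa : ∀ p, ¬ Q'.toBAF.IsPath b a p := fun p hp =>
            hnp _ (hp.append_edge hax)
          have hlt := anc_card_lt hend' hQB'.acyclic hax
          exact ih (anc Q'.toBAF a).card (by omega) a haX le_rfl hnpa
        have e1 : dfAgg ((Q.attackers x).toList.map f')
            = dfAgg ((Q.attackers x).toList.map f) := by
          apply agg_congr
          intro a ha
          have h1 : (a, x) ∈ Q.Att := QBAF.mem_attackers.mp ha
          exact hnb a (hesub (Finset.mem_union_left _ h1))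
            (QBAF.edge_mem hQB (Finset.mem_union_left _ h1)).1
        have e2 : dfAgg ((Q.supporters x).toList.map f')
            = dfAgg ((Q.supporters x).toList.map f) := by
          apply agg_congr
          intro a ha
          have h1 : (a, x) ∈ Q.Supp := QBAF.mem_supporters.mp ha
          exact hnb a (hesub (Finset.mem_union_right _ h1))
            (QBAF.edge_mem hQB (Finset.mem_union_right _ h1)).1
        rw [e1, e2]
    exact fun x hx => key (anc Q'.toBAF x).card x hx le_rfl
  -- main induction on path length
  have main : ∀ n : ℕ, ∀ (p : List (U × U)) (c : U), p.length ≤ n → c ∈ Q.X →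
      Q'.toBAF.IsPath b c p → (∀ q, Q'.toBAF.IsPath b c q → q = p) →
      f' c ≠ f c := by
    intro n
    induction n with
    | zero =>
      intro p c hl _ hp _
      exact absurd (List.length_eq_zero_iff.mp (Nat.le_zero.mp hl)) hp.ne_nil
    | succ n ih =>
      intro p c hl hc hp huq
      obtain ⟨q, x, rfl, hxc, hqx⟩ := hp.lastDecomp
      have hcb : c ≠ b := fun h => hb (h ▸ hc)
      -- in-neighbours other than x are not reachable from b (and differ from b)
      have hlast : ∀ a, (a, c) ∈ Q'.toBAF.edges → a ≠ x →
          (a ≠ b ∧ ∀ r, ¬ Q'.toBAF.IsPath b a r) := by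
        intro a hac hax
        constructor
        · rintro rfl
          have h2 := huq [(a, c)] (.single hac)
          have h3 := congrArg List.getLast? h2
          rw [List.getLast?_concat] at h3
          simp only [List.getLast?] at h3
          exact hax (congrArg Prod.fst (Option.some.inj h3))
        · intro r hr
          have h2 := huq (r ++ [(a, c)]) (hr.append_edge hac)
          have h3 := congrArg List.getLast? h2
          rw [List.getLast?_concat, List.getLast?_concat] at h3
          exact hax (congrArg Prod.fst (Option.some.inj h3))
      -- evaluations of the unchanged in-neighbours agree
      have hnb : ∀ a, (a, c) ∈ Q'.toBAF.edges → a ∈ Q.X → a ≠ x → f' a = f a := by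
        intro a hac haX hax
        exact hunch a haX (hlast a hac hax).2
      have hbsc := hbsQ c hc
      rcases hqx with ⟨rfl, hxbe⟩ | hq
      · -- base case: the unique path is the single edge (b, c)
        replace hxbe : b = x := hxbe.symm
        subst hxbe
        rcases Finset.mem_union.mp hxc with hA | hS
        · -- b attacks c
          have hnS : (b, c) ∉ Q'.Supp := fun h => hQB'.disj (b, c) ⟨hA, h⟩
          rw [hf' c (hXsub hc), hf c hc, hattIns c hc hA, hsuppEq c hc hnS,
            hsub.2.2.2 c hc]
          have hS' : dfAgg ((Q.supporters c).toList.map f')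
              = dfAgg ((Q.supporters c).toList.map f) := by
            apply agg_congr
            intro a ha
            have h1 : (a, c) ∈ Q.Supp := QBAF.mem_supporters.mp ha
            have haX := (QBAF.edge_mem hQB (Finset.mem_union_right _ h1)).1
            exact hnb a (hesub (Finset.mem_union_right _ h1)) haX
              (fun h => hb (h ▸ haX))
          rw [hS']
          apply dfComb_ne_left hbsc.1 hbsc.2
          apply agg_insert_ne _ _ (hbnA c)
          · intro a ha
            have h1 : (a, c) ∈ Q.Att := QBAF.mem_attackers.mp ha
            have haX := (QBAF.edge_mem hQB (Finset.mem_union_left _ h1)).1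
            exact hnb a (hesub (Finset.mem_union_left _ h1)) haX
              (fun h => hb (h ▸ haX))
          · exact (hfb' b hbQ'X).1
          · intro a ha
            have h1 : (a, c) ∈ Q.Att := QBAF.mem_attackers.mp ha
            exact (hfb a (QBAF.edge_mem hQB (Finset.mem_union_left _ h1)).1).2
        · -- b supports c
          have hnA : (b, c) ∉ Q'.Att := fun h => hQB'.disj (b, c) ⟨h, hS⟩
          rw [hf' c (hXsub hc), hf c hc, hsuppIns c hc hS, hattEq c hc hnA,
            hsub.2.2.2 c hc]
          have hA' : dfAgg ((Q.attackers c).toList.map f')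
              = dfAgg ((Q.attackers c).toList.map f) := by
            apply agg_congr
            intro a ha
            have h1 : (a, c) ∈ Q.Att := QBAF.mem_attackers.mp ha
            have haX := (QBAF.edge_mem hQB (Finset.mem_union_left _ h1)).1
            exact hnb a (hesub (Finset.mem_union_left _ h1)) haX
              (fun h => hb (h ▸ haX))
          rw [hA']
          apply dfComb_ne_right hbsc.1 hbsc.2
          apply agg_insert_ne _ _ (hbnS c)
          · intro a ha
            have h1 : (a, c) ∈ Q.Supp := QBAF.mem_supporters.mp ha
            have haX := (QBAF.edge_mem hQB (Finset.mem_union_right _ h1)).1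
            exact hnb a (hesub (Finset.mem_union_right _ h1)) haX
              (fun h => hb (h ▸ haX))
          · exact (hfb' b hbQ'X).1
          · intro a ha
            have h1 : (a, c) ∈ Q.Supp := QBAF.mem_supporters.mp ha
            exact (hfb a (QBAF.edge_mem hQB (Finset.mem_union_right _ h1)).1).2
      · -- inductive case: the path passes through x
        have hxb : x ≠ b := fun h => hQB'.acyclic b q (h ▸ hq)
        have hxX' : x ∈ Q'.X := (hend' _ hxc).1
        have hxX : x ∈ Q.X := by
          rw [hX] at hxX'
          rcases Finset.mem_insert.mp hxX' with h | h
          · exact absurd h hxb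
          · exact h
        have hxcQ : (x, c) ∈ Q.edges := by
          by_contra h
          rcases hedge _ hxc h with h1 | h1
          · exact hxb h1
          · exact hcb h1
        have hbcE : ∀ h : (b, c) ∈ Q'.toBAF.edges, False := by
          intro h
          exact (hlast b h (Ne.symm hxb)).1 rfl
        have hbA : (b, c) ∉ Q'.Att := fun h => hbcE (Finset.mem_union_left _ h)
        have hbS : (b, c) ∉ Q'.Supp := fun h => hbcE (Finset.mem_union_right _ h)
        have huqx : ∀ r, Q'.toBAF.IsPath b x r → r = q := by
          intro r hr
          have := huq (r ++ [(x, c)]) (hr.append_edge hxc)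
          exact List.append_cancel_right this
        have hlen : q.length ≤ n := by
          have := hl
          rw [List.length_append] at this
          simpa using this
        have hxne : f' x ≠ f x := ih q x hlen hxX hq huqx
        rw [hf' c (hXsub hc), hf c hc, hattEq c hc hbA, hsuppEq c hc hbS,
          hsub.2.2.2 c hc]
        rcases Finset.mem_union.mp hxcQ with hA | hS
        · -- x attacks c
          have hxmem : x ∈ Q.attackers c := QBAF.mem_attackers.mpr hA
          have hS' : dfAgg ((Q.supporters c).toList.map f')
              = dfAgg ((Q.supporters c).toList.map f) := by
            apply agg_congr
            intro a ha
            have h1 : (a, c) ∈ Q.Supp := QBAF.mem_supporters.mp ha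
            have haX := (QBAF.edge_mem hQB (Finset.mem_union_right _ h1)).1
            have hax : a ≠ x := fun h =>
              hQB.disj (a, c) ⟨h ▸ hA, h1⟩
            exact hnb a (hesub (Finset.mem_union_right _ h1)) haX hax
          rw [hS']
          apply dfComb_ne_left hbsc.1 hbsc.2
          apply agg_ne _ x hxmem
          · intro a ha hax
            have h1 : (a, c) ∈ Q.Att := QBAF.mem_attackers.mp ha
            have haX := (QBAF.edge_mem hQB (Finset.mem_union_left _ h1)).1
            exact hnb a (hesub (Finset.mem_union_left _ h1)) haX hax
          · exact hxne
          · intro a ha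
            have h1 : (a, c) ∈ Q.Att := QBAF.mem_attackers.mp ha
            exact (hfb a (QBAF.edge_mem hQB (Finset.mem_union_left _ h1)).1).2
        · -- x supports c
          have hxmem : x ∈ Q.supporters c := QBAF.mem_supporters.mpr hS
          have hA' : dfAgg ((Q.attackers c).toList.map f')
              = dfAgg ((Q.attackers c).toList.map f) := by
            apply agg_congr
            intro a ha
            have h1 : (a, c) ∈ Q.Att := QBAF.mem_attackers.mp ha
            have haX := (QBAF.edge_mem hQB (Finset.mem_union_left _ h1)).1
            have hax : a ≠ x := fun h =>
              hQB.disj (a, c) ⟨h1, h ▸ hS⟩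
            exact hnb a (hesub (Finset.mem_union_left _ h1)) haX hax
          rw [hA']
          apply dfComb_ne_right hbsc.1 hbsc.2
          apply agg_ne _ x hxmem
          · intro a ha hax
            have h1 : (a, c) ∈ Q.Supp := QBAF.mem_supporters.mp ha
            have haX := (QBAF.edge_mem hQB (Finset.mem_union_right _ h1)).1
            exact hnb a (hesub (Finset.mem_union_right _ h1)) haX hax
          · exact hxne
          · intro a ha
            have h1 : (a, c) ∈ Q.Supp := QBAF.mem_supporters.mp ha
            exact (hfb a (QBAF.edge_mem hQB (Finset.mem_union_right _ h1)).1).2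
  intro c hc hup
  obtain ⟨p₀, hp₀, hp₀u⟩ := hup
  exact main p₀.length p₀ c le_rfl hc hp₀ (fun q hq => hp₀u q hq)
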